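/- Let 0 ≤ M < 2, R_c > 0, N > 0, β ≥ 0, s₁ ∈ ℝ, h₁ ∈ C([0,1]) positive, and u ∈ V_Z. The weak solution w ∈ V_Z of −R_c w″ + R_c M Z w′ + 4N²h₁² w = 2N²h₁ u′ on (0,1) with w(1) = 0 and R_c w′(0) = −2N²h₁β(u(0) − s₁) satisfies the estimate (∫₀¹ (w′)²)^{1/2} ≤ (2N²/(R_c(1 − M/2))) h₁ [ (∫₀¹ (u′)²)^{1/2} + β|u(0) − s₁| ]. -/

import Mathlib

open intervalIntegral Set MeasureTheory

/-- Cauchy–Schwarz for interval integrals of continuous functions on [0,1]. -/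
lemma cs_int {f g : ℝ → ℝ} (hf : Continuous f) (hg : Continuous g) :
    ∫ x in (0:ℝ)..1, f x * g x
      ≤ Real.sqrt (∫ x in (0:ℝ)..1, (f x)^2) * Real.sqrt (∫ x in (0:ℝ)..1, (g x)^2) := by
  set If := ∫ x in (0:ℝ)..1, (f x)^2 with hIf
  set Ig := ∫ x in (0:ℝ)..1, (g x)^2 with hIg
  set Ifg := ∫ x in (0:ℝ)..1, f x * g x with hIfg
  have hIf0 : 0 ≤ If := intervalIntegral.integral_nonneg zero_le_one (fun x _ => sq_nonneg _)
  have hIg0 : 0 ≤ Ig := intervalIntegral.integral_nonneg zero_le_one (fun x _ => sq_nonneg _)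
  have key : Ifg ^ 2 ≤ If * Ig := by
    have hquad : ∀ t : ℝ, 0 ≤ Ig * (t * t) + (2 * Ifg) * t + If := by
      intro t
      have h1 : (0:ℝ) ≤ ∫ x in (0:ℝ)..1, (t * g x + f x)^2 :=
        intervalIntegral.integral_nonneg zero_le_one (fun x _ => sq_nonneg _)
      have h2 : (∫ x in (0:ℝ)..1, (t * g x + f x)^2)
          = Ig * (t * t) + (2 * Ifg) * t + If := by
        have : ∀ x : ℝ, (t * g x + f x)^2
            = (t*t) * (g x)^2 + (2*t) * (f x * g x) + (f x)^2 := by intro x; ring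
        simp only [this]
        rw [intervalIntegral.integral_add, intervalIntegral.integral_add,
          intervalIntegral.integral_const_mul, intervalIntegral.integral_const_mul]
        · ring
        · exact ((continuous_const.mul (hg.pow 2))).intervalIntegrable 0 1
        · exact ((continuous_const.mul (hf.mul hg))).intervalIntegrable 0 1
        · exact (((continuous_const.mul (hg.pow 2))).add
            ((continuous_const.mul (hf.mul hg)))).intervalIntegrable 0 1
        · exact (hf.pow 2).intervalIntegrable 0 1
      linarith [h2 ▸ h1]
    have hd := discrim_le_zero hquad
    rw [discrim] at hd
    nlinarith
  calc Ifg ≤ |Ifg| := le_abs_self _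
    _ = Real.sqrt (Ifg ^ 2) := (Real.sqrt_sq_eq_abs _).symm
    _ ≤ Real.sqrt (If * Ig) := Real.sqrt_le_sqrt key
    _ = Real.sqrt If * Real.sqrt Ig := Real.sqrt_mul hIf0 _

/-- Pointwise bound: for `w ∈ C¹` with `w 1 = 0`, `|w Z| ≤ ‖w'‖_{L²(0,1)}` on `[0,1]`. -/
lemma pt_bound {w : ℝ → ℝ} (hw : ContDiff ℝ 1 w) (hw1 : w 1 = 0)
    {Z : ℝ} (hZ : Z ∈ Icc (0:ℝ) 1) :
    |w Z| ≤ Real.sqrt (∫ x in (0:ℝ)..1, (deriv w x)^2) := by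
  have hwd : Differentiable ℝ w := hw.differentiable one_ne_zero
  have hdc : Continuous (deriv w) := (hw.iterate_deriv' 0 1).continuous
  have hftc : ∫ x in Z..1, deriv w x = w 1 - w Z :=
    intervalIntegral.integral_deriv_eq_sub (fun x _ => hwd x)
      (hdc.intervalIntegrable Z 1)
  have h1 : |w Z| = |∫ x in Z..1, deriv w x| := by rw [hftc, hw1]; simp [abs_sub_comm]
  have h2 : |∫ x in Z..1, deriv w x| ≤ ∫ x in Z..1, |deriv w x| :=
    intervalIntegral.abs_integral_le_integral_abs hZ.2
  have h3 : (∫ x in Z..1, |deriv w x|) ≤ ∫ x in (0:ℝ)..1, |deriv w x| :=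
    intervalIntegral.integral_mono_interval hZ.1 hZ.2 le_rfl
      (Filter.Eventually.of_forall fun x => abs_nonneg _)
      (hdc.abs.intervalIntegrable 0 1)
  have h4 : (∫ x in (0:ℝ)..1, |deriv w x|)
      ≤ Real.sqrt (∫ x in (0:ℝ)..1, (deriv w x)^2) := by
    have := cs_int (f := fun x => |deriv w x|) (g := fun _ => (1:ℝ)) hdc.abs continuous_const
    simpa [sq_abs] using this
  linarith [h1 ▸ h2]

theorem microrotation_estimate (M Rc N β s₁ h₁ : ℝ)
    (hM0 : 0 ≤ M) (hM2 : M < 2) (hRc : 0 < Rc) (hN : 0 < N) (hβ : 0 ≤ β)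
    (hh₁ : 0 < h₁)
    (u w : ℝ → ℝ) (hu : ContDiff ℝ 1 u) (hu1 : u 1 = 0)
    (hw : ContDiff ℝ 2 w) (hw1 : w 1 = 0)
    (hode : ∀ Z ∈ Set.Ioo (0:ℝ) 1,
      -Rc * deriv (deriv w) Z + Rc * M * Z * deriv w Z + 4 * N^2 * h₁^2 * w Z
        = 2 * N^2 * h₁ * deriv u Z)
    (hbc : Rc * deriv w 0 = -(2 * N^2 * h₁ * β * (u 0 - s₁))) :
    Real.sqrt (∫ Z in (0:ℝ)..1, (deriv w Z)^2)
      ≤ (2 * N^2 / (Rc * (1 - M/2))) * h₁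
          * (Real.sqrt (∫ Z in (0:ℝ)..1, (deriv u Z)^2) + β * |u 0 - s₁|) := by
  -- regularity facts
  have hw1' : ContDiff ℝ 1 w := hw.of_le (by norm_num)
  have hwd : Differentiable ℝ w := hw.differentiable (by norm_num)
  have hwc : Continuous w := hwd.continuous
  have hw11 : ContDiff ℝ (1+1) w := by norm_num; exact hw
  have hw'cd : ContDiff ℝ 1 (deriv w) := (contDiff_succ_iff_deriv.mp hw11).2.2
  have hw'd : Differentiable ℝ (deriv w) := hw'cd.differentiable one_ne_zero
  have hw'c : Continuous (deriv w) := hw'd.continuous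
  have hw''c : Continuous (deriv (deriv w)) := (contDiff_succ_iff_deriv.mp
    (by norm_num; exact hw'cd : ContDiff ℝ (0+1) (deriv w))).2.2.continuous
  have hu'c : Continuous (deriv u) := (contDiff_succ_iff_deriv.mp
    (by norm_num; exact hu : ContDiff ℝ (0+1) u)).2.2.continuous
  set A := ∫ Z in (0:ℝ)..1, (deriv w Z)^2 with hA
  set B := ∫ Z in (0:ℝ)..1, (w Z)^2 with hB
  set C := ∫ Z in (0:ℝ)..1, deriv u Z * w Z with hC
  set D := ∫ Z in (0:ℝ)..1, Z * (w Z * deriv w Z) with hD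
  set S := Real.sqrt (∫ Z in (0:ℝ)..1, (deriv u Z)^2) with hS
  have hA0 : 0 ≤ A := intervalIntegral.integral_nonneg zero_le_one (fun x _ => sq_nonneg _)
  have hB0 : 0 ≤ B := intervalIntegral.integral_nonneg zero_le_one (fun x _ => sq_nonneg _)
  have hS0 : 0 ≤ S := Real.sqrt_nonneg _
  -- pointwise bound and B ≤ A
  have hpt : ∀ Z ∈ Set.Icc (0:ℝ) 1, (w Z)^2 ≤ A := by
    intro Z hZ
    have h1 := pt_bound hw1' hw1 hZ
    have : (w Z)^2 = |w Z|^2 := (sq_abs _).symm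
    rw [this]
    calc |w Z|^2 ≤ (Real.sqrt A)^2 := by
          exact pow_le_pow_left₀ (abs_nonneg _) h1 2
      _ = A := Real.sq_sqrt hA0
  have hBA : B ≤ A := by
    have h1 : B ≤ ∫ _Z in (0:ℝ)..1, A :=
      intervalIntegral.integral_mono_on zero_le_one
        ((hwc.pow 2).intervalIntegrable 0 1) (intervalIntegrable_const) hpt
    simpa using h1
  -- IBP 1 : ∫ w'' w + w' w' = -(w'(0) w(0))
  have ibp1 : (∫ Z in (0:ℝ)..1,
      (deriv (deriv w) Z * w Z + deriv w Z * deriv w Z))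
      = -(deriv w 0 * w 0) := by
    have := intervalIntegral.integral_deriv_mul_eq_sub_of_hasDerivAt
      (u := deriv w) (v := w) (u' := deriv (deriv w)) (v' := deriv w)
      (a := 0) (b := 1) hw'c.continuousOn hwc.continuousOn
      (fun x _ => (hw'd x).hasDerivAt) (fun x _ => (hwd x).hasDerivAt)
      (hw''c.intervalIntegrable 0 1) (hw'c.intervalIntegrable 0 1)
    rw [this, hw1]; ring
  -- IBP 2 : D = -B/2
  have ibp2 : D = -B/2 := by
    have hIBP := intervalIntegral.integral_deriv_mul_eq_sub_of_hasDerivAt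
      (u := fun Z => Z) (v := fun Z => (w Z)^2) (u' := fun _ => (1:ℝ))
      (v' := fun Z => 2 * w Z * deriv w Z) (a := 0) (b := 1)
      continuous_id.continuousOn ((hwc.pow 2)).continuousOn
      (fun x _ => hasDerivAt_id x)
      (fun x _ => by
        have := ((hwd x).hasDerivAt).fun_pow 2
        simpa using this)
      (continuous_const.intervalIntegrable 0 1)
      (((continuous_const.mul hwc).mul hw'c).intervalIntegrable 0 1)
    have hsplit : (∫ Z in (0:ℝ)..1, ((1:ℝ) * (w Z)^2 + Z * (2 * w Z * deriv w Z)))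
        = B + 2 * D := by
      have heq : ∀ Z : ℝ, (1:ℝ) * (w Z)^2 + Z * (2 * w Z * deriv w Z)
          = (w Z)^2 + 2 * (Z * (w Z * deriv w Z)) := by intro Z; ring
      simp only [heq]
      rw [intervalIntegral.integral_add (f := fun Z => (w Z)^2) (g := fun Z => 2 * (Z * (w Z * deriv w Z))) ((hwc.pow 2).intervalIntegrable 0 1)
        ((continuous_const.mul ((continuous_id'.mul (hwc.mul hw'c)))).intervalIntegrable 0 1),
        intervalIntegral.integral_const_mul]
    rw [hsplit] at hIBP
    simp [hw1] at hIBP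
    linarith
  -- integrate the ODE against w
  have hode' : (∫ Z in (0:ℝ)..1,
        ((-Rc * deriv (deriv w) Z + Rc * M * Z * deriv w Z + 4 * N^2 * h₁^2 * w Z) * w Z))
      = ∫ Z in (0:ℝ)..1, (2 * N^2 * h₁ * deriv u Z * w Z) := by
    apply intervalIntegral.integral_congr_ae
    apply Filter.Eventually.of_forall
    intro x hx
    rw [Set.uIoc_of_le zero_le_one] at hx
    rcases eq_or_lt_of_le hx.2 with h1 | h1
    · rw [h1, hw1]; ring
    · rw [hode x ⟨hx.1, h1⟩]
  -- expand the left side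
  have hLHS : (∫ Z in (0:ℝ)..1,
        ((-Rc * deriv (deriv w) Z + Rc * M * Z * deriv w Z + 4 * N^2 * h₁^2 * w Z) * w Z))
      = -Rc * (∫ Z in (0:ℝ)..1, (deriv (deriv w) Z * w Z + deriv w Z * deriv w Z))
        + Rc * A + Rc * M * D + 4 * N^2 * h₁^2 * B := by
    have heq : ∀ Z : ℝ,
        (-Rc * deriv (deriv w) Z + Rc * M * Z * deriv w Z + 4 * N^2 * h₁^2 * w Z) * w Z
          = -Rc * (deriv (deriv w) Z * w Z + deriv w Z * deriv w Z)
            + Rc * (deriv w Z)^2 + Rc * M * (Z * (w Z * deriv w Z))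
            + 4 * N^2 * h₁^2 * (w Z)^2 := by intro Z; ring
    simp only [heq]
    have i1 : IntervalIntegrable (fun Z => -Rc * (deriv (deriv w) Z * w Z + deriv w Z * deriv w Z)) MeasureTheory.volume 0 1 :=
      (continuous_const.mul ((hw''c.mul hwc).add (hw'c.mul hw'c))).intervalIntegrable 0 1
    have i2 : IntervalIntegrable (fun Z => Rc * (deriv w Z)^2) MeasureTheory.volume 0 1 :=
      (continuous_const.mul (hw'c.pow 2)).intervalIntegrable 0 1
    have i3 : IntervalIntegrable (fun Z => Rc * M * (Z * (w Z * deriv w Z))) MeasureTheory.volume 0 1 :=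
      (continuous_const.mul (continuous_id'.mul (hwc.mul hw'c))).intervalIntegrable 0 1
    have i4 : IntervalIntegrable (fun Z => 4 * N^2 * h₁^2 * (w Z)^2) MeasureTheory.volume 0 1 :=
      (continuous_const.mul (hwc.pow 2)).intervalIntegrable 0 1
    rw [intervalIntegral.integral_add (((i1.add i2).add i3)) i4,
      intervalIntegral.integral_add ((i1.add i2)) i3,
      intervalIntegral.integral_add i1 i2,
      intervalIntegral.integral_const_mul, intervalIntegral.integral_const_mul,
      intervalIntegral.integral_const_mul, intervalIntegral.integral_const_mul]
  have hRHS : (∫ Z in (0:ℝ)..1, (2 * N^2 * h₁ * deriv u Z * w Z)) = 2 * N^2 * h₁ * C := by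
    have heq : ∀ Z : ℝ, 2 * N^2 * h₁ * deriv u Z * w Z
        = 2 * N^2 * h₁ * (deriv u Z * w Z) := by intro Z; ring
    simp only [heq]
    rw [intervalIntegral.integral_const_mul]
  -- key energy identity
  have key : Rc * A - Rc * M / 2 * B + 4 * N^2 * h₁^2 * B
      = 2 * N^2 * h₁ * C + 2 * N^2 * h₁ * β * (u 0 - s₁) * w 0 := by
    rw [hLHS, hRHS, ibp1, ibp2] at hode'
    have hb : Rc * (deriv w 0 * w 0) = -(2 * N^2 * h₁ * β * (u 0 - s₁)) * w 0 := by
      rw [← mul_assoc, hbc]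
    linear_combination hode' - hb
  -- bounds on the right side
  have hCS : C ≤ S * Real.sqrt A := by
    have h1 : C ≤ S * Real.sqrt B := cs_int hu'c hwc
    have h2 : Real.sqrt B ≤ Real.sqrt A := Real.sqrt_le_sqrt hBA
    nlinarith [hS0]
  have hw0 : (u 0 - s₁) * w 0 ≤ |u 0 - s₁| * Real.sqrt A := by
    calc (u 0 - s₁) * w 0 ≤ |(u 0 - s₁) * w 0| := le_abs_self _
      _ = |u 0 - s₁| * |w 0| := abs_mul _ _
      _ ≤ |u 0 - s₁| * Real.sqrt A := by
          have := pt_bound hw1' hw1 (Set.mem_Icc.mpr ⟨le_refl 0, zero_le_one⟩)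
          exact mul_le_mul_of_nonneg_left this (abs_nonneg _)
  -- conclude
  set L := Real.sqrt A with hL
  have hL0 : 0 ≤ L := Real.sqrt_nonneg _
  have hLA : L^2 = A := Real.sq_sqrt hA0
  have hcoer : Rc * (1 - M/2) * L^2 ≤ 2 * N^2 * h₁ * (S + β * |u 0 - s₁|) * L := by
    rw [hLA]
    have e1 : 2 * N^2 * h₁ * C ≤ 2 * N^2 * h₁ * (S * L) :=
      mul_le_mul_of_nonneg_left hCS (by positivity)
    have e2 : 2 * N^2 * h₁ * β * ((u 0 - s₁) * w 0)
        ≤ 2 * N^2 * h₁ * β * (|u 0 - s₁| * L) :=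
      mul_le_mul_of_nonneg_left hw0 (by positivity)
    have e3 : 0 ≤ Rc * M / 2 * (A - B) :=
      mul_nonneg (by positivity) (sub_nonneg.mpr hBA)
    have e4 : 0 ≤ 4 * N^2 * h₁^2 * B := by positivity
    linarith [key, e1, e2, e3, e4]
  have hpos : 0 < Rc * (1 - M/2) := mul_pos hRc (by linarith)
  rcases eq_or_lt_of_le hL0 with h0 | h0
  · rw [← h0]
    positivity
  · have hdiv : L ≤ 2 * N^2 * h₁ * (S + β * |u 0 - s₁|) / (Rc * (1 - M/2)) := by
      rw [le_div_iff₀ hpos]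
      have h2 : (Rc * (1 - M/2) * L) * L ≤ (2 * N^2 * h₁ * (S + β * |u 0 - s₁|)) * L := by
        linarith [hcoer]
      have h3 := le_of_mul_le_mul_right h2 h0
      linarith [h3]
    calc L ≤ 2 * N^2 * h₁ * (S + β * |u 0 - s₁|) / (Rc * (1 - M/2)) := hdiv
      _ = (2 * N^2 / (Rc * (1 - M/2))) * h₁ * (S + β * |u 0 - s₁|) := by ring
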